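/- For all integers k ≥ 2 and n ≥ 1, the diameter of the Sierpiński graph S^n_k equals 2^n − 1. -/

import Mathlib

/-- The generalized Sierpiński graph `S^n_G` of a base graph `G` on the vertex set
`[k]_0 = {0, …, k−1}`: the vertices are the words of length `n` over `[k]_0`, and two
distinct words `u, v` are adjacent iff there is an index `i` with `u j = v j` for `j < i`,
`u i` adjacent to `v i` in `G`, and `u j = v i`, `v j = u i` for all `j > i`. -/
def genSierpinski {k : ℕ} (G : SimpleGraph (Fin k)) (n : ℕ) :
    SimpleGraph (Fin n → Fin k) where
  Adj u v := ∃ i : Fin n,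
    (∀ j, j < i → u j = v j) ∧ G.Adj (u i) (v i) ∧ ∀ j, i < j → u j = v i ∧ v j = u i
  symm := by
    constructor
    rintro u v ⟨i, h1, h2, h3⟩
    exact ⟨i, fun j hj => (h1 j hj).symm, h2.symm, fun j hj => ⟨(h3 j hj).2, (h3 j hj).1⟩⟩
  loopless := by
    constructor
    rintro u ⟨i, -, h2, -⟩
    exact G.irrefl h2

/-- The Sierpiński graph `S^n_k`, i.e. the generalized Sierpiński graph of the complete
graph `K_k` on `[k]_0` (in which two vertices are adjacent iff they are distinct). -/
def sierpinski (k n : ℕ) : SimpleGraph (Fin n → Fin k) :=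
  genSierpinski (⊤ : SimpleGraph (Fin k)) n

namespace SierpAux

lemma sierp_adj {k n : ℕ} {u v : Fin n → Fin k} :
    (sierpinski k n).Adj u v ↔ ∃ i : Fin n,
      (∀ j, j < i → u j = v j) ∧ u i ≠ v i ∧ ∀ j, i < j → u j = v i ∧ v j = u i := by
  constructor
  · rintro ⟨i, h1, h2, h3⟩; exact ⟨i, h1, h2.ne, h3⟩
  · rintro ⟨i, h1, h2, h3⟩; exact ⟨i, h1, h2, h3⟩

lemma adj_cons {k n : ℕ} (a : Fin k) {u v : Fin n → Fin k}
    (h : (sierpinski k n).Adj u v) :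
    (sierpinski k (n + 1)).Adj (Fin.cons a u) (Fin.cons a v) := by
  rw [sierp_adj] at h ⊢
  obtain ⟨i, h1, h2, h3⟩ := h
  refine ⟨i.succ, ?_, by simpa using h2, ?_⟩
  · intro j
    refine Fin.cases ?_ (fun j' => ?_) j <;> intro hj'
    · rfl
    · simp only [Fin.cons_succ]
      exact h1 j' (by simpa [Fin.succ_lt_succ_iff] using hj')
  · intro j
    refine Fin.cases ?_ (fun j' => ?_) j <;> intro hj'
    · exact absurd hj' (by simp [Fin.lt_def])
    · simp only [Fin.cons_succ]
      exact h3 j' (by simpa [Fin.succ_lt_succ_iff] using hj')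

/-- Prepending a letter as a graph homomorphism. -/
def consHom (k n : ℕ) (a : Fin k) : sierpinski k n →g sierpinski k (n + 1) where
  toFun := fun w => Fin.cons a w
  map_rel' := by intro u v h; exact adj_cons a h

@[simp] lemma consHom_apply {k n : ℕ} (a : Fin k) (w : Fin n → Fin k) :
    consHom k n a w = Fin.cons a w := rfl

lemma adj_flip {k n : ℕ} {a b : Fin k} (h : a ≠ b) :
    (sierpinski k (n + 1)).Adj (Fin.cons a (fun _ => b)) (Fin.cons b (fun _ => a)) := by
  rw [sierp_adj]
  refine ⟨0, ?_, by simpa using h, ?_⟩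
  · intro j hj; exact absurd hj (by simp [Fin.lt_def])
  · intro j
    refine Fin.cases ?_ (fun j' => ?_) j <;> intro hj'
    · exact absurd hj' (lt_irrefl _)
    · simp

lemma cons_const {k n : ℕ} (b : Fin k) :
    Fin.cons b (fun _ => b) = (fun _ => b : Fin (n + 1) → Fin k) := by
  funext j
  refine Fin.cases rfl (fun j' => ?_) j
  simp

/-- Walk to a constant word of length ≤ 2^n - 1. -/
lemma walk_to_const (k : ℕ) : ∀ (n : ℕ) (u : Fin n → Fin k) (b : Fin k),
    ∃ p : (sierpinski k n).Walk u (fun _ => b), p.length + 1 ≤ 2 ^ n := by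
  intro n
  induction n with
  | zero =>
    intro u b
    have : u = fun _ => b := funext fun j => j.elim0
    subst this
    exact ⟨SimpleGraph.Walk.nil, by simp⟩
  | succ n ih =>
    intro u b
    have hu : Fin.cons (u 0) (Fin.tail u) = u := Fin.cons_self_tail u
    by_cases hb : u 0 = b
    · obtain ⟨p, hp⟩ := ih (Fin.tail u) b
      refine ⟨((p.map (consHom k n (u 0))).copy (by rw [consHom_apply, hu]) ?_), ?_⟩
      · rw [consHom_apply, hb, cons_const]
      · simp only [SimpleGraph.Walk.length_copy, SimpleGraph.Walk.length_map]
        have := Nat.pow_le_pow_right (by norm_num : 1 ≤ 2) (Nat.le_succ n)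
        omega
    · obtain ⟨p1, hp1⟩ := ih (Fin.tail u) b
      obtain ⟨p2, hp2⟩ := ih (fun _ => u 0) b
      have e : (sierpinski k (n + 1)).Adj (Fin.cons (u 0) (fun _ => b))
          (Fin.cons b (fun _ => u 0)) := adj_flip hb
      refine ⟨((p1.map (consHom k n (u 0))).copy (by rw [consHom_apply, hu])
          (consHom_apply _ _)).append (SimpleGraph.Walk.cons e
          ((p2.map (consHom k n b)).copy (consHom_apply _ _)
            (by rw [consHom_apply, cons_const]))), ?_⟩
      simp only [SimpleGraph.Walk.length_append, SimpleGraph.Walk.length_cons,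
        SimpleGraph.Walk.length_copy, SimpleGraph.Walk.length_map]
      have : 2 ^ (n + 1) = 2 ^ n + 2 ^ n := by ring
      omega

/-- Any two words joined by a walk of length ≤ 2^n - 1. -/
lemma walk_pair (k : ℕ) : ∀ (n : ℕ) (u v : Fin n → Fin k),
    ∃ p : (sierpinski k n).Walk u v, p.length + 1 ≤ 2 ^ n := by
  intro n
  induction n with
  | zero =>
    intro u v
    have : u = v := funext fun j => j.elim0
    subst this
    exact ⟨SimpleGraph.Walk.nil, by simp⟩
  | succ n ih =>
    intro u v
    have hu : Fin.cons (u 0) (Fin.tail u) = u := Fin.cons_self_tail u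
    have hv : Fin.cons (v 0) (Fin.tail v) = v := Fin.cons_self_tail v
    by_cases hab : u 0 = v 0
    · obtain ⟨p, hp⟩ := ih (Fin.tail u) (Fin.tail v)
      refine ⟨(p.map (consHom k n (u 0))).copy (by rw [consHom_apply, hu])
        (by rw [consHom_apply, hab, hv]), ?_⟩
      simp only [SimpleGraph.Walk.length_copy, SimpleGraph.Walk.length_map]
      have := Nat.pow_le_pow_right (by norm_num : 1 ≤ 2) (Nat.le_succ n)
      omega
    · obtain ⟨p1, hp1⟩ := walk_to_const k n (Fin.tail u) (v 0)
      obtain ⟨p2, hp2⟩ := walk_to_const k n (Fin.tail v) (u 0)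
      have e : (sierpinski k (n + 1)).Adj (Fin.cons (u 0) (fun _ => v 0))
          (Fin.cons (v 0) (fun _ => u 0)) := adj_flip hab
      refine ⟨((p1.map (consHom k n (u 0))).copy (by rw [consHom_apply, hu])
          (consHom_apply _ _)).append (SimpleGraph.Walk.cons e
          ((p2.reverse.map (consHom k n (v 0))).copy (consHom_apply _ _)
            (by rw [consHom_apply, hv]))), ?_⟩
      simp only [SimpleGraph.Walk.length_append, SimpleGraph.Walk.length_cons,
        SimpleGraph.Walk.length_copy, SimpleGraph.Walk.length_map,
        SimpleGraph.Walk.length_reverse]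
      have : 2 ^ (n + 1) = 2 ^ n + 2 ^ n := by ring
      omega

/-- The potential function. -/
def phi {k : ℕ} (n : ℕ) (c : Fin k) (w : Fin n → Fin k) : ℤ :=
  ∑ j : Fin n, (if w j = c then 0 else 2 ^ (n - 1 - (j : ℕ)))

lemma geom2 (s : ℕ) : ∑ r ∈ Finset.range s, (2 : ℤ) ^ r = 2 ^ s - 1 := by
  induction s with
  | zero => simp
  | succ s ih => rw [Finset.sum_range_succ, ih]; ring

lemma sum_pow_Ico (m t : ℕ) (ht : t ≤ m) :
    ∑ j ∈ Finset.Ico t m, (2 : ℤ) ^ (m - 1 - j) = 2 ^ (m - t) - 1 := by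
  rw [Finset.sum_Ico_eq_sum_range]
  have h : ∀ i ∈ Finset.range (m - t), (2 : ℤ) ^ (m - 1 - (t + i)) = 2 ^ (m - t - 1 - i) := by
    intro i hi
    rw [Finset.mem_range] at hi
    congr 1
    omega
  rw [Finset.sum_congr rfl h, Finset.sum_range_reflect (fun i => (2 : ℤ) ^ i) (m - t), geom2]

lemma sum_pow_Ioi {n : ℕ} (i : Fin n) :
    ∑ j ∈ Finset.Ioi i, (2 : ℤ) ^ (n - 1 - (j : ℕ)) = 2 ^ (n - 1 - (i : ℕ)) - 1 := by
  have hn : 0 < n := i.pos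
  have he : n - 1 - (i : ℕ) = n - ((i : ℕ) + 1) := by omega
  rw [he, ← sum_pow_Ico n ((i : ℕ) + 1) (by omega)]
  refine Finset.sum_nbij' (fun j => (j : ℕ)) (fun t => if h : t < n then ⟨t, h⟩ else i)
    ?_ ?_ ?_ ?_ ?_
  · intro a ha; rw [Finset.mem_Ioi] at ha
    rw [Finset.mem_Ico]
    exact ⟨Fin.lt_def.mp ha, a.isLt⟩
  · intro a ha; rw [Finset.mem_Ico] at ha
    rw [dif_pos ha.2, Finset.mem_Ioi]
    exact ha.1
  · intro a _; simp [a.isLt]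
  · intro a ha; rw [Finset.mem_Ico] at ha
    rw [dif_pos ha.2]
  · intro a _; rfl

lemma phi_step {k n : ℕ} (c : Fin k) {u v : Fin n → Fin k}
    (h : (sierpinski k n).Adj u v) : |phi n c u - phi n c v| ≤ 1 := by
  rw [sierp_adj] at h
  obtain ⟨i, h1, h2, h3⟩ := h
  set δ : ℤ := (if u i = c then 0 else 1) - (if v i = c then 0 else 1) with hδ
  have key : phi n c u - phi n c v = δ := by
    rw [phi, phi, ← Finset.sum_sub_distrib]
    have hterm : ∀ j : Fin n,
        ((if u j = c then (0:ℤ) else 2 ^ (n - 1 - (j:ℕ))) -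
          (if v j = c then 0 else 2 ^ (n - 1 - (j:ℕ)))) =
        (if j = i then δ * 2 ^ (n - 1 - (i:ℕ)) else 0) +
        (if i < j then -δ * 2 ^ (n - 1 - (j:ℕ)) else 0) := by
      intro j
      rcases lt_trichotomy j i with hj | hj | hj
      · rw [h1 j hj, if_neg hj.ne, if_neg (not_lt_of_gt hj)]
        ring
      · subst hj
        rw [if_pos rfl, if_neg (lt_irrefl j), hδ]
        split_ifs <;> ring
      · rw [(h3 j hj).1, (h3 j hj).2, if_neg hj.ne', if_pos hj, hδ]
        split_ifs <;> ring
    rw [Finset.sum_congr rfl (fun j _ => hterm j), Finset.sum_add_distrib,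
      Finset.sum_ite_eq' Finset.univ i, if_pos (Finset.mem_univ i)]
    have hfil : Finset.filter (fun j => i < j) Finset.univ = Finset.Ioi i := by
      ext a; simp
    rw [← Finset.sum_filter, hfil, ← Finset.mul_sum, sum_pow_Ioi]
    ring
  rw [key, hδ]
  split_ifs <;> norm_num

lemma phi_walk {k n : ℕ} (c : Fin k) {u v : Fin n → Fin k}
    (p : (sierpinski k n).Walk u v) :
    |phi n c u - phi n c v| ≤ (p.length : ℤ) := by
  induction p with
  | nil => simp
  | @cons a b d h q ih =>
    calc |phi n c a - phi n c d|
        ≤ |phi n c a - phi n c b| + |phi n c b - phi n c d| := abs_sub_le _ _ _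
      _ ≤ 1 + q.length := add_le_add (phi_step c h) ih
      _ ≤ ((SimpleGraph.Walk.cons h q).length : ℤ) := by
          rw [SimpleGraph.Walk.length_cons]; push_cast; ring_nf; omega

lemma phi_const_ne {k n : ℕ} {c b : Fin k} (h : b ≠ c) :
    phi n c (fun _ => b) = 2 ^ n - 1 := by
  rw [phi]
  simp only [if_neg h]
  rw [Fin.sum_univ_eq_sum_range (fun j => (2:ℤ) ^ (n - 1 - j)), Finset.range_eq_Ico,
    sum_pow_Ico n 0 (Nat.zero_le n), Nat.sub_zero]

lemma phi_const_self {k n : ℕ} (c : Fin k) : phi n c (fun _ => c) = 0 := by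
  simp [phi]

end SierpAux

/-- For all `k ≥ 2` and `n ≥ 1`, the diameter of the Sierpiński graph `S^n_k`
equals `2^n − 1`. -/
theorem diam_sierpinski (k n : ℕ) (hk : 2 ≤ k) (hn : 1 ≤ n) :
    (sierpinski k n).diam = 2 ^ n - 1 := by
  open SierpAux in
  set G := sierpinski k n with hG
  have h2n : 1 ≤ 2 ^ n := Nat.one_le_two_pow
  set c0 : Fin k := ⟨0, by omega⟩ with hc0
  set c1 : Fin k := ⟨1, by omega⟩ with hc1
  have hne : c0 ≠ c1 := by simp [hc0, hc1, Fin.ext_iff]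
  have upper : G.ediam ≤ ((2 ^ n - 1 : ℕ) : ℕ∞) := by
    apply SimpleGraph.ediam_le_of_edist_le
    intro u v
    obtain ⟨p, hp⟩ := SierpAux.walk_pair k n u v
    exact (SimpleGraph.edist_le p).trans (Nat.cast_le.mpr (by omega))
  have lower : ((2 ^ n - 1 : ℕ) : ℕ∞) ≤ G.ediam := by
    refine le_trans ?_ (SimpleGraph.edist_le_ediam (u := fun _ => c0) (v := fun _ => c1))
    rw [SimpleGraph.edist_eq_sInf]
    apply le_sInf
    rintro _ ⟨p, rfl⟩
    have hp := SierpAux.phi_walk c1 p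
    rw [SierpAux.phi_const_ne hne, SierpAux.phi_const_self] at hp
    have h1 : ((2:ℤ) ^ n - 1) ≤ (p.length : ℤ) := by
      refine le_trans (le_abs_self _) ?_
      simpa using hp
    have h2 : (2 ^ n - 1 : ℕ) ≤ p.length := by
      have hcast : ((2 ^ n - 1 : ℕ) : ℤ) = 2 ^ n - 1 := by
        rw [Nat.cast_sub h2n]; push_cast; ring
      exact_mod_cast hcast ▸ h1
    exact Nat.cast_le.mpr h2
  have hediam : G.ediam = ((2 ^ n - 1 : ℕ) : ℕ∞) := le_antisymm upper lower
  show G.ediam.toNat = 2 ^ n - 1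
  rw [hediam, ENat.toNat_coe]
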